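/- Let ℓ ≥ 1 and m = 2ℓ. In the symmetric group on {1, …, m}, let μ = (1 2)(3 4)⋯(2ℓ−1 2ℓ) (the product of the transpositions swapping 2i−1 and 2i for i = 1, …, ℓ) and let τ = (2 3)(4 5)⋯(2ℓ−2 2ℓ−1) (the product of the transpositions swapping 2i and 2i+1 for i = 1, …, ℓ−1; τ is the identity when ℓ = 1). Then the composite τ∘μ (apply μ first, then τ) is an m-cycle, i.e. a cycle whose support is all of {1, …, m}. -/

import Mathlib

open Equiv Equiv.Perm

private lemma prodFix {α : Type*} (l : List (Equiv.Perm α)) (x : α)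
    (h : ∀ σ ∈ l, σ x = x) : l.prod x = x := by
  induction l with
  | nil => rfl
  | cons a t ih =>
    rw [List.prod_cons, Equiv.Perm.mul_apply,
      ih (fun σ hσ => h σ (List.mem_cons_of_mem _ hσ))]
    exact h a List.mem_cons_self

private lemma prodMapApply {α : Type*} {n : ℕ} (f : Fin n → Equiv.Perm α) (i : Fin n)
    (x y : α)
    (hfi : f i x = y)
    (hlt : ∀ j : Fin n, j.val < i.val → f j y = y)
    (hgt : ∀ j : Fin n, i.val < j.val → f j x = x) :
    ((List.finRange n).map f).prod x = y := by
  set L := (List.finRange n).map f with hL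
  have hlen : L.length = n := by simp [hL]
  have hiL : i.val < L.length := by rw [hlen]; exact i.isLt
  have hgetk : ∀ (k : ℕ) (hk : k < L.length), L[k] = f ⟨k, by omega⟩ := by
    intro k hk
    simp [hL]
  have hsplit : L = L.take i.val ++ L[i.val] :: L.drop (i.val + 1) := by
    conv_lhs => rw [← List.take_append_drop i.val L, List.drop_eq_getElem_cons hiL]
  rw [hsplit, List.prod_append, List.prod_cons]
  have h2 : (L.drop (i.val + 1)).prod x = x := by
    apply prodFix
    intro σ hσ
    rw [List.mem_drop_iff_getElem] at hσ
    obtain ⟨k, hk, rfl⟩ := hσ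
    rw [hgetk _ (by omega)]
    exact hgt _ (by simp; omega)
  have h1 : ∀ z, z = y → (L.take i.val).prod z = y := by
    rintro z rfl
    apply prodFix
    intro σ hσ
    rw [List.mem_take_iff_getElem] at hσ
    obtain ⟨k, hk, rfl⟩ := hσ
    simp only [lt_min_iff] at hk
    rw [hgetk _ (by omega)]
    exact hlt _ (by simp; omega)
  have hival : (⟨i.val, hiL.trans_le hlen.le⟩ : Fin n) = i := by
    exact Fin.ext rfl
  rw [Equiv.Perm.mul_apply, Equiv.Perm.mul_apply, h2, hgetk i.val hiL, hival, hfi]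
  exact h1 y rfl

private lemma finRotate_val {n : ℕ} (i : Fin n) :
    ((finRotate n) i).val = if i.val + 1 = n then 0 else i.val + 1 := by
  obtain ⟨m, rfl⟩ : ∃ m, n = m + 1 := ⟨n - 1, by have := i.pos; omega⟩
  rw [coe_finRotate]
  by_cases h : i = Fin.last m
  · subst h
    simp [Fin.val_last]
  · have hv : i.val < m := Fin.val_lt_last h
    rw [if_neg h, if_neg (by omega)]


private def eAux (ℓ : ℕ) : Equiv.Perm (Fin (2 * ℓ)) where
  toFun j := ⟨if j.val < ℓ then 2 * j.val else 4 * ℓ - 1 - 2 * j.val,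
    by have := j.isLt; split_ifs <;> omega⟩
  invFun x := ⟨if x.val % 2 = 0 then x.val / 2 else (4 * ℓ - 1 - x.val) / 2,
    by have := x.isLt; split_ifs <;> omega⟩
  left_inv j := by
    have := j.isLt
    apply Fin.ext
    simp only
    split_ifs <;> omega
  right_inv x := by
    have := x.isLt
    apply Fin.ext
    simp only
    split_ifs <;> omega

private lemma eAux_val {ℓ : ℕ} (j : Fin (2 * ℓ)) :
    (eAux ℓ j).val = if j.val < ℓ then 2 * j.val else 4 * ℓ - 1 - 2 * j.val := rfl

private lemma eAux_inv_val {ℓ : ℕ} (x : Fin (2 * ℓ)) :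
    ((eAux ℓ)⁻¹ x).val =
      if x.val % 2 = 0 then x.val / 2 else (4 * ℓ - 1 - x.val) / 2 := rfl

set_option maxHeartbeats 1000000 in
/-- Let `m = 2ℓ`. With `μ = (1 2)(3 4)⋯(2ℓ−1 2ℓ)` and `τ = (2 3)(4 5)⋯(2ℓ−2 2ℓ−1)`
(written here 0-indexed on `Fin (2ℓ)`; `τ` is the identity when `ℓ = 1`), the composite
`τ ∘ μ` is an `m`-cycle. -/
theorem stmt2 (ℓ : ℕ) (hℓ : 1 ≤ ℓ)
    (μ τ : Equiv.Perm (Fin (2 * ℓ)))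
    (hμ : μ = ((List.finRange ℓ).map (fun (i : Fin ℓ) =>
      Equiv.swap (⟨2 * (i : ℕ), by have := i.isLt; omega⟩ : Fin (2 * ℓ))
                 (⟨2 * (i : ℕ) + 1, by have := i.isLt; omega⟩ : Fin (2 * ℓ)))).prod)
    (hτ : τ = ((List.finRange (ℓ - 1)).map (fun (i : Fin (ℓ - 1)) =>
      Equiv.swap (⟨2 * (i : ℕ) + 1, by have := i.isLt; omega⟩ : Fin (2 * ℓ))
                 (⟨2 * (i : ℕ) + 2, by have := i.isLt; omega⟩ : Fin (2 * ℓ)))).prod) :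
    (τ * μ).IsCycle ∧ (τ * μ).support = Finset.univ := by
  -- pointwise formula for μ
  have hμv : ∀ x : Fin (2 * ℓ), μ x =
      ⟨if x.val % 2 = 0 then x.val + 1 else x.val - 1,
        by have := x.isLt; split_ifs <;> omega⟩ := by
    intro x
    have hx := x.isLt
    rw [hμ]
    by_cases hpar : x.val % 2 = 0
    · simp only [if_pos hpar]
      apply prodMapApply _ (⟨x.val / 2, by omega⟩ : Fin ℓ) <;> try intro j hj
      all_goals (try simp only [Fin.val_mk] at hj)
      all_goals simp only [Equiv.swap_apply_def, Fin.ext_iff, Fin.val_mk,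
        apply_ite (Fin.val)]
      all_goals split_ifs <;> omega
    · simp only [if_neg hpar]
      apply prodMapApply _ (⟨x.val / 2, by omega⟩ : Fin ℓ) <;> try intro j hj
      all_goals (try simp only [Fin.val_mk] at hj)
      all_goals simp only [Equiv.swap_apply_def, Fin.ext_iff, Fin.val_mk,
        apply_ite (Fin.val)]
      all_goals split_ifs <;> omega
  -- pointwise formula for τ
  have hτv : ∀ x : Fin (2 * ℓ), τ x =
      ⟨if x.val = 0 ∨ x.val = 2 * ℓ - 1 then x.val
        else if x.val % 2 = 1 then x.val + 1 else x.val - 1,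
        by have := x.isLt; split_ifs <;> omega⟩ := by
    intro x
    have hx := x.isLt
    rw [hτ]
    by_cases h0 : x.val = 0 ∨ x.val = 2 * ℓ - 1
    · have hfix : ∀ σ ∈ (List.finRange (ℓ - 1)).map (fun (i : Fin (ℓ - 1)) =>
          Equiv.swap (⟨2 * (i : ℕ) + 1, by have := i.isLt; omega⟩ : Fin (2 * ℓ))
                     (⟨2 * (i : ℕ) + 2, by have := i.isLt; omega⟩ : Fin (2 * ℓ))),
          σ x = x := by
        intro σ hσ
        rw [List.mem_map] at hσ
        obtain ⟨j, hj, rfl⟩ := hσ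
        have hjv := j.isLt
        simp only [Equiv.swap_apply_def, Fin.ext_iff, Fin.val_mk,
          apply_ite (Fin.val)]
        split_ifs <;> omega
      rw [prodFix _ _ hfix]
      exact Fin.ext (by simp [if_pos h0])
    · have h0' := h0
      push_neg at h0'
      simp only [if_neg h0]
      by_cases hpar : x.val % 2 = 1
      · simp only [if_pos hpar]
        apply prodMapApply _ (⟨(x.val - 1) / 2, by omega⟩ : Fin (ℓ - 1)) <;>
          try intro j hj
        all_goals try have hjv := j.isLt
        all_goals (try simp only [Fin.val_mk] at hj)
        all_goals simp only [Equiv.swap_apply_def, Fin.ext_iff, Fin.val_mk,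
          apply_ite (Fin.val)]
        all_goals split_ifs <;> omega
      · simp only [if_neg hpar]
        apply prodMapApply _ (⟨(x.val - 1) / 2, by omega⟩ : Fin (ℓ - 1)) <;>
          try intro j hj
        all_goals try have hjv := j.isLt
        all_goals (try simp only [Fin.val_mk] at hj)
        all_goals simp only [Equiv.swap_apply_def, Fin.ext_iff, Fin.val_mk,
          apply_ite (Fin.val)]
        all_goals split_ifs <;> omega
  have hμv' : ∀ x : Fin (2 * ℓ), (μ x).val =
      if x.val % 2 = 0 then x.val + 1 else x.val - 1 := fun x => by rw [hμv x]
  have hτv' : ∀ x : Fin (2 * ℓ), (τ x).val =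
      if x.val = 0 ∨ x.val = 2 * ℓ - 1 then x.val
        else if x.val % 2 = 1 then x.val + 1 else x.val - 1 := fun x => by rw [hτv x]
  clear hμv hτv hμ hτ
  -- conjugation with finRotate
  have hconj : τ * μ = eAux ℓ * finRotate (2 * ℓ) * (eAux ℓ)⁻¹ := by
    apply Equiv.ext
    intro x
    have hx := x.isLt
    apply Fin.ext
    rw [Equiv.Perm.mul_apply, Equiv.Perm.mul_apply, Equiv.Perm.mul_apply,
      hτv' (μ x), hμv' x]
    rw [eAux_val, finRotate_val, eAux_inv_val]
    have h2 : ((eAux ℓ)⁻¹ x).val < 2 * ℓ := ((eAux ℓ)⁻¹ x).isLt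
    rw [eAux_inv_val] at h2
    by_cases hp : x.val % 2 = 0
    · simp only [if_pos hp] at h2 ⊢
      split_ifs <;> (try simp only [false_or, or_false] at *) <;> omega
    · simp only [if_neg hp] at h2 ⊢
      split_ifs <;> (try simp only [false_or, or_false] at *) <;> omega
  rw [hconj]
  refine ⟨(isCycle_finRotate_of_le (by omega)).conj, ?_⟩
  rw [Equiv.Perm.support_conj, support_finRotate_of_le (by omega)]
  exact Finset.map_univ_equiv _
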